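/- Let E be an exact category. An object (I•, ι•) of MMor_k(E) is an injective object of the exact category MMor_k(E) if and only if each I_i is injective in E and each structure map ι_i : I_i → I_{i+1} is a split monomorphism. -/

import Mathlib

open CategoryTheory Limits

universe v u

/-- An exact structure (in the sense of Quillen/Bühler) on an additive category `E`:
a class of kernel–cokernel pairs (`ses f g` meaning `X ↣ Y ↠ Z` is an admissible short
exact sequence), closed under isomorphism, such that admissible monomorphisms (resp.
epimorphisms) contain identities, are closed under composition, and are stable under
pushout (resp. pullback). -/
structure ExactStructure (E : Type u) [Category.{v} E] [Preadditive E] [HasZeroObject E] where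
  ses : ∀ ⦃X Y Z : E⦄, (X ⟶ Y) → (Y ⟶ Z) → Prop
  comp_zero : ∀ {X Y Z : E} {f : X ⟶ Y} {g : Y ⟶ Z}, ses f g → f ≫ g = 0
  isKernel : ∀ {X Y Z : E} {f : X ⟶ Y} {g : Y ⟶ Z} (h : ses f g),
      Nonempty (IsLimit (KernelFork.ofι f (comp_zero h)))
  isCokernel : ∀ {X Y Z : E} {f : X ⟶ Y} {g : Y ⟶ Z} (h : ses f g),
      Nonempty (IsColimit (CokernelCofork.ofπ g (comp_zero h)))
  iso_closed : ∀ {X Y Z X' Y' Z' : E} {f : X ⟶ Y} {g : Y ⟶ Z}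
      (eX : X ≅ X') (eY : Y ≅ Y') (eZ : Z ≅ Z') {f' : X' ⟶ Y'} {g' : Y' ⟶ Z'},
      f ≫ eY.hom = eX.hom ≫ f' → g ≫ eZ.hom = eY.hom ≫ g' → ses f g → ses f' g'
  id_mono : ∀ X : E, ∃ (Z : E) (g : X ⟶ Z), ses (𝟙 X) g
  id_epi : ∀ X : E, ∃ (W : E) (f : W ⟶ X), ses f (𝟙 X)
  mono_comp : ∀ {X Y Z : E} {f : X ⟶ Y} {g : Y ⟶ Z},
      (∃ (W : E) (h : Y ⟶ W), ses f h) → (∃ (W : E) (h : Z ⟶ W), ses g h) →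
      ∃ (W : E) (h : Z ⟶ W), ses (f ≫ g) h
  epi_comp : ∀ {X Y Z : E} {f : X ⟶ Y} {g : Y ⟶ Z},
      (∃ (W : E) (h : W ⟶ X), ses h f) → (∃ (W : E) (h : W ⟶ Y), ses h g) →
      ∃ (W : E) (h : W ⟶ X), ses h (f ≫ g)
  mono_pushout : ∀ {X Y Z : E} (f : X ⟶ Y) (t : X ⟶ Z),
      (∃ (W : E) (g : Y ⟶ W), ses f g) →
      ∃ (P : E) (f' : Z ⟶ P) (t' : Y ⟶ P), IsPushout t f f' t' ∧
        ∃ (W : E) (g : P ⟶ W), ses f' g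
  epi_pullback : ∀ {X Y Z : E} (g : Y ⟶ X) (t : Z ⟶ X),
      (∃ (W : E) (f : W ⟶ Y), ses f g) →
      ∃ (P : E) (g' : P ⟶ Z) (t' : P ⟶ Y), IsPullback g' t' t g ∧
        ∃ (W : E) (f : W ⟶ P), ses f g'

namespace ExactStructure

variable {E : Type u} [Category.{v} E] [Preadditive E] [HasZeroObject E]
variable (S : ExactStructure E)

/-- `f` is an admissible monomorphism. -/
def AdmMono {X Y : E} (f : X ⟶ Y) : Prop := ∃ (Z : E) (g : Y ⟶ Z), S.ses f g

/-- `g` is an admissible epimorphism. -/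
def AdmEpi {Y Z : E} (g : Y ⟶ Z) : Prop := ∃ (X : E) (f : X ⟶ Y), S.ses f g

/-- An object of `E` is injective (w.r.t. the exact structure). -/
def EInjective (I : E) : Prop :=
  ∀ ⦃X Y : E⦄ (f : X ⟶ Y), S.AdmMono f → ∀ u : X ⟶ I, ∃ v : Y ⟶ I, f ≫ v = u

/-- An object of `E` is projective (w.r.t. the exact structure). -/
def EProjective (P : E) : Prop :=
  ∀ ⦃Y Z : E⦄ (g : Y ⟶ Z), S.AdmEpi g → ∀ u : P ⟶ Z, ∃ v : P ⟶ Y, v ≫ g = u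

/-- An object of the monomorphism category `MMor_k(E)`: a diagram of `k` composable
admissible monomorphisms in `E`. -/
structure MMorObj (k : ℕ) where
  obj : Fin (k + 1) → E
  map : ∀ i : Fin k, obj i.castSucc ⟶ obj i.succ
  adm : ∀ i, S.AdmMono (map i)

/-- A morphism in the monomorphism category `MMor_k(E)`. -/
structure MMorHom {k : ℕ} (X Y : S.MMorObj k) where
  app : ∀ i, X.obj i ⟶ Y.obj i
  comm : ∀ i : Fin k, X.map i ≫ app i.succ = app i.castSucc ≫ Y.map i

variable {S}

/-- A componentwise admissible short exact sequence in `MMor_k(E)`. -/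
def MMorSes {k : ℕ} {X Y Z : S.MMorObj k} (f : S.MMorHom X Y) (g : S.MMorHom Y Z) : Prop :=
  ∀ i, S.ses (f.app i) (g.app i)

/-- Admissible monomorphisms of `MMor_k(E)`. -/
def MMorAdmMono {k : ℕ} {X Y : S.MMorObj k} (f : S.MMorHom X Y) : Prop :=
  ∃ (Z : S.MMorObj k) (g : S.MMorHom Y Z), MMorSes f g

/-- Admissible epimorphisms of `MMor_k(E)`. -/
def MMorAdmEpi {k : ℕ} {Y Z : S.MMorObj k} (g : S.MMorHom Y Z) : Prop :=
  ∃ (X : S.MMorObj k) (f : S.MMorHom X Y), MMorSes f g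

/-- Injective objects of the exact category `MMor_k(E)`. -/
def MMorInjective {k : ℕ} (I : S.MMorObj k) : Prop :=
  ∀ ⦃X Y : S.MMorObj k⦄ (f : S.MMorHom X Y), MMorAdmMono f →
    ∀ u : S.MMorHom X I, ∃ v : S.MMorHom Y I, ∀ i, f.app i ≫ v.app i = u.app i

/-- Projective objects of the exact category `MMor_k(E)`. -/
def MMorProjective {k : ℕ} (P : S.MMorObj k) : Prop :=
  ∀ ⦃Y Z : S.MMorObj k⦄ (g : S.MMorHom Y Z), MMorAdmEpi g →
    ∀ u : S.MMorHom P Z, ∃ v : S.MMorHom P Y, ∀ i, v.app i ≫ g.app i = u.app i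

end ExactStructure

open ZeroObject

section Aux

variable {E : Type u} [Category.{v} E] [Preadditive E] [HasZeroObject E]

lemma ES_ses_from_zero (S : ExactStructure E) (B : E) :
    S.ses (0 : (0 : E) ⟶ B) (𝟙 B) := by
  obtain ⟨W, w, hw⟩ := S.id_epi B
  have hw0 : w = 0 := by simpa using S.comp_zero hw
  obtain ⟨hl⟩ := S.isKernel hw
  have hzW : IsZero W := by
    rw [IsZero.iff_id_eq_zero]
    exact Fork.IsLimit.hom_ext hl (by simp [hw0])
  exact S.iso_closed hzW.isoZero (Iso.refl B) (Iso.refl B) (by simp [hw0]) (by simp) hw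

lemma ES_admMono_zero_src (S : ExactStructure E) {A B : E} (hA : IsZero A) (f : A ⟶ B) :
    S.AdmMono f :=
  ⟨B, 𝟙 B, S.iso_closed hA.isoZero.symm (Iso.refl B) (Iso.refl B)
    ((isZero_zero E).eq_of_src _ _) (by simp) (ES_ses_from_zero S B)⟩

lemma ES_admMono_of_iso (S : ExactStructure E) {A B : E} (e : A ≅ B) : S.AdmMono e.hom := by
  obtain ⟨Z, g, hg⟩ := S.id_mono A
  exact ⟨Z, e.inv ≫ g, S.iso_closed (Iso.refl A) e (Iso.refl Z) (by simp) (by simp) hg⟩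

lemma ES_admMono_eqToHom (S : ExactStructure E) {A B : E} (h : A = B) :
    S.AdmMono (eqToHom h) := ES_admMono_of_iso S (eqToIso h)

lemma ES_ses_conj (S : ExactStructure E) {A A' B B' C C' : E} {f : A ⟶ B} {g : B ⟶ C}
    (hA : A' = A) (hB : B' = B) (hC : C' = C) (h : S.ses f g) :
    S.ses (eqToHom hA ≫ f ≫ eqToHom hB.symm) (eqToHom hB ≫ g ≫ eqToHom hC.symm) :=
  S.iso_closed (eqToIso hA.symm) (eqToIso hB.symm) (eqToIso hC.symm) (by simp) (by simp) h

/-- The object `0 → ⋯ → 0 → A → A → ⋯ → A` (with `A` starting at position `j`). -/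
noncomputable def stObj {k : ℕ} (j : Fin (k + 1)) (A : E) (i : Fin (k + 1)) : E :=
  if (i : ℕ) < (j : ℕ) then (0 : E) else A

lemma stObj_lt {k : ℕ} {j : Fin (k + 1)} (A : E) {i : Fin (k + 1)} (h : (i : ℕ) < (j : ℕ)) :
    stObj j A i = (0 : E) := if_pos h

lemma stObj_ge {k : ℕ} {j : Fin (k + 1)} (A : E) {i : Fin (k + 1)} (h : ¬ (i : ℕ) < (j : ℕ)) :
    stObj j A i = A := if_neg h

lemma stObj_isZero {k : ℕ} {j : Fin (k + 1)} (A : E) {i : Fin (k + 1)}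
    (h : (i : ℕ) < (j : ℕ)) : IsZero (stObj j A i) := by
  rw [stObj_lt A h]; exact isZero_zero E

noncomputable def stMap {k : ℕ} (j : Fin (k + 1)) (A : E) (i : Fin k) :
    stObj j A i.castSucc ⟶ stObj j A i.succ :=
  if h : (i : ℕ) < (j : ℕ) then 0 else
    eqToHom ((stObj_ge A (show ¬ ((i.castSucc : ℕ) < (j : ℕ)) by
        simpa using h)).trans
      (stObj_ge A (show ¬ ((i.succ : ℕ) < (j : ℕ)) by
        simp only [Fin.val_succ]; omega)).symm)

/-- The object of `MMor_k(E)` given by `0 → ⋯ → 0 → A → A → ⋯ → A`. -/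
noncomputable def stMMor (S : ExactStructure E) {k : ℕ} (j : Fin (k + 1)) (A : E) :
    S.MMorObj k where
  obj := stObj j A
  map := stMap j A
  adm := by
    intro i
    unfold stMap
    split_ifs with h
    · exact ES_admMono_zero_src S (stObj_isZero A (by simpa using h)) _
    · exact ES_admMono_eqToHom S _

noncomputable def stHom {k : ℕ} (j : Fin (k + 1)) {A B : E} (φ : A ⟶ B) (i : Fin (k + 1)) :
    stObj j A i ⟶ stObj j B i :=
  if h : (i : ℕ) < (j : ℕ) then 0 else
    eqToHom (stObj_ge A h) ≫ φ ≫ eqToHom (stObj_ge B h).symm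

lemma stHom_comm {k : ℕ} (j : Fin (k + 1)) {A B : E} (φ : A ⟶ B) (i : Fin k) :
    stMap j A i ≫ stHom j φ i.succ = stHom j φ i.castSucc ≫ stMap j B i := by
  by_cases h : (i : ℕ) < (j : ℕ)
  · exact (stObj_isZero A (show ((i.castSucc : ℕ) < (j : ℕ)) by simpa using h)).eq_of_src _ _
  · have hc : ¬ ((i.castSucc : ℕ) < (j : ℕ)) := by simpa using h
    have hs : ¬ ((i.succ : ℕ) < (j : ℕ)) := by simp only [Fin.val_succ]; omega
    simp only [stMap, stHom, dif_neg h, dif_neg hc, dif_neg hs]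
    simp

lemma stHom_ses (S : ExactStructure E) {k : ℕ} (j : Fin (k + 1)) {A B C : E}
    {φ : A ⟶ B} {ψ : B ⟶ C} (h : S.ses φ ψ) (i : Fin (k + 1)) :
    S.ses (stHom j φ i) (stHom j ψ i) := by
  by_cases hi : (i : ℕ) < (j : ℕ)
  · simp only [stHom, dif_pos hi]
    have hbase : S.ses (0 : (0 : E) ⟶ (0 : E)) (0 : (0 : E) ⟶ (0 : E)) := by
      simpa using ES_ses_from_zero S (0 : E)
    exact S.iso_closed (eqToIso (stObj_lt A hi)).symm (eqToIso (stObj_lt B hi)).symm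
      (eqToIso (stObj_lt C hi)).symm ((isZero_zero E).eq_of_src _ _)
      ((isZero_zero E).eq_of_src _ _) hbase
  · simp only [stHom, dif_neg hi]
    exact ES_ses_conj S (stObj_ge A hi) (stObj_ge B hi) (stObj_ge C hi) h

/-- Composite of the structure maps of an `MMorObj` from index `a` to index `b`. -/
noncomputable def chain {S : ExactStructure E} {k : ℕ} (A : S.MMorObj k) (a : Fin (k + 1)) :
    ∀ b : Fin (k + 1), (a : ℕ) ≤ (b : ℕ) → (A.obj a ⟶ A.obj b) :=
  Fin.induction (motive := fun b => (a : ℕ) ≤ (b : ℕ) → (A.obj a ⟶ A.obj b))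
    (fun h => eqToHom (congrArg A.obj (Fin.ext (by
      simp only [Fin.val_zero] at h ⊢; omega))))
    (fun i prev h =>
      if h' : (a : ℕ) ≤ (i.castSucc : ℕ) then prev h' ≫ A.map i
      else eqToHom (congrArg A.obj (Fin.ext (by
        simp only [Fin.val_succ, Fin.coe_castSucc] at h h' ⊢; omega))))

lemma chain_succ {S : ExactStructure E} {k : ℕ} (A : S.MMorObj k) (a : Fin (k + 1))
    (i : Fin k) (h : (a : ℕ) ≤ (i.castSucc : ℕ)) (h2 : (a : ℕ) ≤ (i.succ : ℕ)) :
    chain A a i.succ h2 = chain A a i.castSucc h ≫ A.map i := by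
  simp only [chain, Fin.induction_succ, dif_pos h]

lemma chain_refl {S : ExactStructure E} {k : ℕ} (A : S.MMorObj k) (a : Fin (k + 1))
    (h : (a : ℕ) ≤ (a : ℕ)) : chain A a a h = 𝟙 (A.obj a) := by
  cases a using Fin.cases with
  | zero => simp only [chain, Fin.induction_zero]; simp
  | succ i =>
      simp only [chain, Fin.induction_succ,
        dif_neg (show ¬ ((i.succ : ℕ) ≤ (i.castSucc : ℕ)) by
          simp only [Fin.val_succ, Fin.coe_castSucc]; omega)]
      simp

noncomputable def stU {S : ExactStructure E} {k : ℕ} (I : S.MMorObj k) (j : Fin (k + 1))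
    {X : E} (u : X ⟶ I.obj j) (i : Fin (k + 1)) : stObj j X i ⟶ I.obj i :=
  if h : (i : ℕ) < (j : ℕ) then 0 else
    eqToHom (stObj_ge X h) ≫ u ≫ chain I j i (by omega)

lemma stU_comm {S : ExactStructure E} {k : ℕ} (I : S.MMorObj k) (j : Fin (k + 1))
    {X : E} (u : X ⟶ I.obj j) (i : Fin k) :
    stMap j X i ≫ stU I j u i.succ = stU I j u i.castSucc ≫ I.map i := by
  by_cases h : (i : ℕ) < (j : ℕ)
  · exact (stObj_isZero X (show ((i.castSucc : ℕ) < (j : ℕ)) by simpa using h)).eq_of_src _ _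
  · have hc : ¬ ((i.castSucc : ℕ) < (j : ℕ)) := by simpa using h
    have hs : ¬ ((i.succ : ℕ) < (j : ℕ)) := by simp only [Fin.val_succ]; omega
    simp only [stMap, stU, dif_neg h, dif_neg hc, dif_neg hs]
    rw [chain_succ I j i (by omega) (by omega)]
    simp

end Aux

/-- Let `E` be an exact category.  An object `(I•, ι•)` of `MMor_k(E)` is
injective in the exact category `MMor_k(E)` if and only if each `I i` is injective in `E`
and each structure map `ι i` is a split monomorphism. -/
theorem mmor_injective_iff
    {E : Type u} [Category.{v} E] [Preadditive E] [HasZeroObject E]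
    (S : ExactStructure E) (k : ℕ) (I : S.MMorObj k) :
    ExactStructure.MMorInjective I ↔
      ((∀ i, S.EInjective (I.obj i)) ∧
        ∀ i : Fin k, ∃ r : I.obj i.succ ⟶ I.obj i.castSucc, I.map i ≫ r = 𝟙 (I.obj i.castSucc)) := by
  constructor
  · intro hI
    have hinj : ∀ j, S.EInjective (I.obj j) := by
      intro j X Y f hf u
      obtain ⟨Z, g, hses⟩ := hf
      have hne : ¬ ((j : ℕ) < (j : ℕ)) := lt_irrefl _
      obtain ⟨v, hv⟩ := hI (X := stMMor S j X) (Y := stMMor S j Y)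
        ⟨stHom j f, stHom_comm j f⟩
        ⟨stMMor S j Z, ⟨stHom j g, stHom_comm j g⟩, fun i => stHom_ses S j hses i⟩
        ⟨stU I j u, stU_comm I j u⟩
      have hj := hv j
      simp only [stHom, stU, dif_neg hne] at hj
      rw [chain_refl I j (le_refl _), Category.comp_id] at hj
      refine ⟨eqToHom (stObj_ge Y hne : stObj j Y j = Y).symm ≫ v.app j, ?_⟩
      rw [← cancel_epi (eqToHom (stObj_ge X hne : stObj j X j = X))]
      exact ((Category.assoc _ _ _).trans (congrArg (fun t => eqToHom (stObj_ge X hne) ≫ t) (Category.assoc _ _ _))).symm.trans hj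
    refine ⟨hinj, fun i => hinj i.castSucc (I.map i) (I.adm i) (𝟙 _)⟩
  · rintro ⟨hinj, -⟩ Xo Yo f hf u
    obtain ⟨Zo, g, hses⟩ := hf
    obtain ⟨v0, hv0⟩ := hinj 0 (f.app 0) ⟨_, _, hses 0⟩ (u.app 0)
    have st : ∀ (i : Fin k)
        (p : {vi : Yo.obj i.castSucc ⟶ I.obj i.castSucc //
              f.app i.castSucc ≫ vi = u.app i.castSucc}),
        {w : Yo.obj i.succ ⟶ I.obj i.succ //
          f.app i.succ ≫ w = u.app i.succ ∧ Yo.map i ≫ w = p.1 ≫ I.map i} := by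
      refine fun i p => Classical.choice ?_
      obtain ⟨vi, hvi⟩ := p
      obtain ⟨w, hw⟩ := hinj i.succ (f.app i.succ) ⟨_, _, hses i.succ⟩ (u.app i.succ)
      have hfe : f.app i.castSucc ≫ (vi ≫ I.map i - Yo.map i ≫ w) = 0 := by
        have h1 : f.app i.castSucc ≫ vi ≫ I.map i = u.app i.castSucc ≫ I.map i := by
          rw [← Category.assoc, hvi]
        have h2 : f.app i.castSucc ≫ Yo.map i ≫ w = u.app i.castSucc ≫ I.map i := by
          rw [← Category.assoc, ← f.comm i, Category.assoc, hw, u.comm i]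
        rw [Preadditive.comp_sub, h1, h2, sub_self]
      obtain ⟨hc⟩ := S.isCokernel (hses i.castSucc)
      obtain ⟨e', he'⟩ := CokernelCofork.IsColimit.desc' hc _ hfe
      simp only [Cofork.π_ofπ] at he'
      obtain ⟨e'', he''⟩ := hinj i.succ (Zo.map i) (Zo.adm i) e'
      refine ⟨⟨w + g.app i.succ ≫ e'', ?_, ?_⟩⟩
      · rw [Preadditive.comp_add, hw, ← Category.assoc, S.comp_zero (hses i.succ),
          zero_comp, add_zero]
      · have h3 : Yo.map i ≫ g.app i.succ ≫ e'' = vi ≫ I.map i - Yo.map i ≫ w := by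
          rw [← Category.assoc, g.comm i, Category.assoc, he'', he']
        rw [Preadditive.comp_add, h3]
        abel
    refine ⟨⟨fun i => (Fin.induction
        (motive := fun i => {vi : Yo.obj i ⟶ I.obj i // f.app i ≫ vi = u.app i})
        ⟨v0, hv0⟩ (fun i p => ⟨(st i p).1, (st i p).2.1⟩) i).1, fun i => ?_⟩,
      fun i => (Fin.induction
        (motive := fun i => {vi : Yo.obj i ⟶ I.obj i // f.app i ≫ vi = u.app i})
        ⟨v0, hv0⟩ (fun i p => ⟨(st i p).1, (st i p).2.1⟩) i).2⟩
    simp only [Fin.induction_succ]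
    exact (st i _).2.2
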